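/- arXiv:2106.09160 — 3 statements merged into one kernel-verified Lean document; each statement's English description precedes it below -/
import Mathlib

section
/- Let p ∈ [1,∞) and q ∈ [p,∞), and let g ∈ L^p(Q₁). There exists a constant C depending only on p and q such that for all 0 < t₁ ≤ t₂ ≤ s and all y with Q_{s+t₁+t₂}(y) ⊆ Q₁, one has ⨍_{Q_s(y)} (M_{t₂}^p[g])^q ≤ C ⨍_{Q_{s+t₂}(y)} (M_{t₁}^p[g])^q. -/
open MeasureTheory

/-- The open cube `Q_r(x) = x + (-r,r)³` in `ℝ³` (the ball of radius `r` in the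
sup metric on `Fin 3 → ℝ`). -/
noncomputable def cube (x : Fin 3 → ℝ) (r : ℝ) : Set (Fin 3 → ℝ) := Metric.ball x r

/-- The averaging operator `M_t^p[g](x) = (⨍_{Q_t(x)} |g|^p)^{1/p}`. -/
noncomputable def avgOp (p t : ℝ) (g : (Fin 3 → ℝ) → ℝ) (x : Fin 3 → ℝ) : ℝ :=
  (⨍ y in cube x t, |g y| ^ p) ^ (1 / p)

private lemma vol_ball_fin3 (x : Fin 3 → ℝ) {r : ℝ} (hr : 0 < r) :
    volume (Metric.ball x r) = ENNReal.ofReal ((2*r)^3) := by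
  rw [volume_pi_ball _ hr]
  simp only [Real.volume_ball]
  rw [Finset.prod_const, ← ENNReal.ofReal_pow (by linarith)]
  norm_num

private lemma inter_vol_fin3 {u z : Fin 3 → ℝ} {t₁ t₂ : ℝ} (h1 : 0 < t₁) (h12 : t₁ ≤ t₂)
    (hu : u ∈ Metric.ball z t₂) :
    ENNReal.ofReal (t₁ ^ 3) ≤ volume (Metric.ball u t₁ ∩ Metric.ball z t₂) := by
  have h2 : (0:ℝ) < t₂ := lt_of_lt_of_le h1 h12
  have hd : ∀ i, |u i - z i| < t₂ := by
    intro i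
    have := (dist_pi_lt_iff h2).1 (Metric.mem_ball.1 hu) i
    rwa [Real.dist_eq] at this
  rw [ball_pi _ h1, ball_pi _ h2, ← Set.pi_inter_distrib, volume_pi_pi]
  have : ENNReal.ofReal (t₁ ^ 3) = ∏ _i : Fin 3, ENNReal.ofReal t₁ := by
    rw [Finset.prod_const, ← ENNReal.ofReal_pow h1.le]
    norm_num
  rw [this]
  apply Finset.prod_le_prod'
  intro i _
  rw [Real.ball_eq_Ioo, Real.ball_eq_Ioo, Set.Ioo_inter_Ioo, Real.volume_Ioo]
  apply ENNReal.ofReal_le_ofReal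
  have := abs_lt.1 (hd i)
  rcases le_total (u i + t₁) (z i + t₂) with h | h <;>
    rcases le_total (u i - t₁) (z i - t₂) with h' | h' <;>
    simp [min_def, max_def, h, h'] <;> linarith

private lemma ball_lintegral_eq {F : (Fin 3 → ℝ) → ENNReal} {t : ℝ} (w : Fin 3 → ℝ) :
    ∫⁻ u in Metric.ball w t, F u
      = ∫⁻ u, ({p : (Fin 3 → ℝ) × (Fin 3 → ℝ) | dist p.2 p.1 < t}.indicator
          (fun p => F p.2)) (w, u) := by
  rw [← lintegral_indicator measurableSet_ball]
  refine lintegral_congr fun u => ?_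
  by_cases h : u ∈ Metric.ball w t
  · rw [Set.indicator_of_mem h, Set.indicator_of_mem (by simpa [Metric.mem_ball] using h)]
  · rw [Set.indicator_of_notMem h, Set.indicator_of_notMem (by simpa [Metric.mem_ball] using h)]

private lemma meas_set_dist {t : ℝ} :
    MeasurableSet {p : (Fin 3 → ℝ) × (Fin 3 → ℝ) | dist p.2 p.1 < t} :=
  measurableSet_lt (measurable_dist.comp (measurable_snd.prodMk measurable_fst))
    measurable_const

private lemma meas_ball_lintegral {F : (Fin 3 → ℝ) → ENNReal} (hF : Measurable F) {t : ℝ} :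
    Measurable fun w : Fin 3 → ℝ => ∫⁻ u in Metric.ball w t, F u := by
  simp_rw [ball_lintegral_eq (F := F) (t := t)]
  exact Measurable.lintegral_prod_right
    (Measurable.indicator (hF.comp measurable_snd) meas_set_dist)

private lemma swap_formula {F : (Fin 3 → ℝ) → ENNReal} (hF : Measurable F) {t : ℝ}
    {S : Set (Fin 3 → ℝ)} :
    ∫⁻ w in S, ∫⁻ u in Metric.ball w t, F u
      = ∫⁻ u, F u * volume (Metric.ball u t ∩ S) := by
  simp_rw [ball_lintegral_eq (F := F) (t := t)]
  rw [lintegral_lintegral_swap]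
  · refine lintegral_congr fun u => ?_
    have h1 : ∀ w, ({p : (Fin 3 → ℝ) × (Fin 3 → ℝ) | dist p.2 p.1 < t}.indicator
        (fun p => F p.2)) (w, u) = (Metric.ball u t).indicator (fun _ => F u) w := by
      intro w
      by_cases h : dist u w < t
      · rw [Set.indicator_of_mem
            (show (w,u) ∈ {p : (Fin 3 → ℝ) × (Fin 3 → ℝ) | dist p.2 p.1 < t} from h),
          Set.indicator_of_mem (show w ∈ Metric.ball u t by
            simpa [Metric.mem_ball, dist_comm] using h)]
      · rw [Set.indicator_of_notMem
            (show (w,u) ∉ {p : (Fin 3 → ℝ) × (Fin 3 → ℝ) | dist p.2 p.1 < t} from h),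
          Set.indicator_of_notMem (show w ∉ Metric.ball u t by
            simpa [Metric.mem_ball, dist_comm] using h)]
    simp_rw [h1]
    rw [lintegral_indicator_const measurableSet_ball, Measure.restrict_apply measurableSet_ball,
      mul_comm]
  · exact (Measurable.indicator (hF.comp measurable_snd) meas_set_dist).aemeasurable

private lemma lower_double {F : (Fin 3 → ℝ) → ENNReal} (hF : Measurable F) {t₁ t₂ : ℝ}
    (h1 : 0 < t₁) (h12 : t₁ ≤ t₂) (z : Fin 3 → ℝ) :
    ENNReal.ofReal (t₁ ^ 3) * ∫⁻ u in Metric.ball z t₂, F u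
      ≤ ∫⁻ w in Metric.ball z t₂, ∫⁻ u in Metric.ball w t₁, F u := by
  rw [swap_formula hF]
  calc ENNReal.ofReal (t₁ ^ 3) * ∫⁻ u in Metric.ball z t₂, F u
      = ∫⁻ u in Metric.ball z t₂, ENNReal.ofReal (t₁ ^ 3) * F u := by
        rw [lintegral_const_mul' _ _ ENNReal.ofReal_ne_top]
    _ ≤ ∫⁻ u in Metric.ball z t₂, F u * volume (Metric.ball u t₁ ∩ Metric.ball z t₂) := by
        refine setLIntegral_mono' measurableSet_ball fun u hu => ?_
        rw [mul_comm]
        exact mul_le_mul_right (inter_vol_fin3 h1 h12 hu) _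
    _ ≤ ∫⁻ u, F u * volume (Metric.ball u t₁ ∩ Metric.ball z t₂) :=
        setLIntegral_le_lintegral _ _

private lemma upper_double {G : (Fin 3 → ℝ) → ENNReal} (hG : Measurable G) {t s : ℝ}
    (ht : 0 < t) (y : Fin 3 → ℝ) :
    ∫⁻ z in Metric.ball y s, ∫⁻ w in Metric.ball z t, G w
      ≤ ENNReal.ofReal ((2*t)^3) * ∫⁻ w in Metric.ball y (s + t), G w := by
  rw [swap_formula hG]
  calc ∫⁻ w, G w * volume (Metric.ball w t ∩ Metric.ball y s)
      ≤ ∫⁻ w, (Metric.ball y (s + t)).indicator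
          (fun w => ENNReal.ofReal ((2*t)^3) * G w) w := by
        refine lintegral_mono fun w => ?_
        by_cases h : w ∈ Metric.ball y (s + t)
        · rw [Set.indicator_of_mem h, mul_comm]
          refine mul_le_mul_left ?_ _
          calc volume (Metric.ball w t ∩ Metric.ball y s) ≤ volume (Metric.ball w t) :=
                measure_mono Set.inter_subset_left
            _ = ENNReal.ofReal ((2*t)^3) := vol_ball_fin3 _ ht
        · rw [Set.indicator_of_notMem h]
          have : Metric.ball w t ∩ Metric.ball y s = ∅ := by
            ext z'
            simp only [Set.mem_inter_iff, Metric.mem_ball, Set.mem_empty_iff_false, iff_false,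
              not_and]
            intro hz1 hz2
            exact absurd (Metric.mem_ball.2 (lt_of_le_of_lt (dist_triangle w z' y)
              (by rw [dist_comm w z']; linarith))) h
          rw [this, measure_empty, mul_zero]
    _ = ENNReal.ofReal ((2*t)^3) * ∫⁻ w in Metric.ball y (s + t), G w := by
        rw [lintegral_indicator measurableSet_ball,
          lintegral_const_mul' _ _ ENNReal.ofReal_ne_top]

private lemma jensen_rpow {α : Type*} [MeasurableSpace α] {μ : Measure α} {h : α → ENNReal}
    (hm : AEMeasurable h μ) {r : ℝ} (hr : 1 ≤ r) :
    (∫⁻ x, h x ∂μ) ^ r ≤ (∫⁻ x, h x ^ r ∂μ) * (μ Set.univ) ^ (r - 1) := by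
  rcases eq_or_lt_of_le hr with rfl | hr1
  · simp
  · have hconj : r.HolderConjugate (r / (r - 1)) := Real.HolderConjugate.conjExponent hr1
    have key := ENNReal.lintegral_mul_le_Lp_mul_Lq μ hconj hm aemeasurable_const
      (g := fun _ => (1 : ENNReal))
    simp only [Pi.mul_apply, mul_one, ENNReal.one_rpow, lintegral_const, one_mul] at key
    calc (∫⁻ x, h x ∂μ) ^ r
        ≤ ((∫⁻ x, h x ^ r ∂μ) ^ (1/r) * (μ Set.univ) ^ (1/(r/(r-1)))) ^ r :=
          ENNReal.rpow_le_rpow key (by linarith)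
      _ = (∫⁻ x, h x ^ r ∂μ) * (μ Set.univ) ^ (r - 1) := by
          rw [ENNReal.mul_rpow_of_nonneg _ _ (by linarith : (0:ℝ) ≤ r),
            ← ENNReal.rpow_mul, ← ENNReal.rpow_mul]
          congr 1
          · rw [one_div, inv_mul_cancel₀ (by linarith : r ≠ 0), ENNReal.rpow_one]
          · congr 1
            field_simp

private lemma div_jensen {A B m : ENNReal} {r : ℝ} (hr : 1 ≤ r) (hm0 : m ≠ 0) (hmt : m ≠ ⊤)
    (h : A ^ r ≤ B * m ^ (r - 1)) : (A / m) ^ r ≤ B / m := by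
  have h0 : (0:ℝ) ≤ r := by linarith
  calc (A / m) ^ r = A ^ r / m ^ r := ENNReal.div_rpow_of_nonneg _ _ h0
    _ ≤ B * m ^ (r - 1) / m ^ r := ENNReal.div_le_div_right h _
    _ = B / m := by
        rw [div_eq_mul_inv, div_eq_mul_inv, mul_assoc, ← ENNReal.rpow_neg,
          ← ENNReal.rpow_add _ _ hm0 hmt, show r - 1 + -r = -1 by ring, ENNReal.rpow_neg_one]

/-- Step A: pointwise bound for the ENNReal averages. -/
private lemma stepA {F : (Fin 3 → ℝ) → ENNReal} (hF : Measurable F) {r t₁ t₂ : ℝ}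
    (hr : 1 ≤ r) (h1 : 0 < t₁) (h12 : t₁ ≤ t₂) (z : Fin 3 → ℝ) :
    ((∫⁻ u in Metric.ball z t₂, F u) / ENNReal.ofReal ((2*t₂)^3)) ^ r
      ≤ (8:ENNReal) ^ r *
        ((∫⁻ w in Metric.ball z t₂,
            ((∫⁻ u in Metric.ball w t₁, F u) / ENNReal.ofReal ((2*t₁)^3)) ^ r)
          / ENNReal.ofReal ((2*t₂)^3)) := by
  have ht₂ : (0:ℝ) < t₂ := lt_of_lt_of_le h1 h12
  have hr0 : (0:ℝ) ≤ r := by linarith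
  have hc0 : ENNReal.ofReal (t₁^3) ≠ 0 := by
    simp only [ne_eq, ENNReal.ofReal_eq_zero, not_le]; positivity
  have hct : ENNReal.ofReal (t₁^3) ≠ ⊤ := ENNReal.ofReal_ne_top
  have hv₁0 : ENNReal.ofReal ((2*t₁)^3) ≠ 0 := by
    simp only [ne_eq, ENNReal.ofReal_eq_zero, not_le]; positivity
  have hv₁t : ENNReal.ofReal ((2*t₁)^3) ≠ ⊤ := ENNReal.ofReal_ne_top
  have hm0 : ENNReal.ofReal ((2*t₂)^3) ≠ 0 := by
    simp only [ne_eq, ENNReal.ofReal_eq_zero, not_le]; positivity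
  have hmt : ENNReal.ofReal ((2*t₂)^3) ≠ ⊤ := ENNReal.ofReal_ne_top
  have hΦmeas : Measurable
      (fun w => (∫⁻ u in Metric.ball w t₁, F u) / ENNReal.ofReal ((2*t₁)^3)) :=
    (meas_ball_lintegral hF).div_const _
  -- Step (i): I₂ ≤ 8 * ∫ Φ over the ball
  have step1 : (∫⁻ u in Metric.ball z t₂, F u)
      ≤ 8 * ∫⁻ w in Metric.ball z t₂,
          (∫⁻ u in Metric.ball w t₁, F u) / ENNReal.ofReal ((2*t₁)^3) := by
    have h8 : ENNReal.ofReal ((2*t₁)^3) = 8 * ENNReal.ofReal (t₁^3) := by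
      rw [show (2*t₁)^3 = 8 * t₁^3 by ring, ENNReal.ofReal_mul (by norm_num : (0:ℝ) ≤ 8)]
      norm_num
    have hJ : ∫⁻ w in Metric.ball z t₂, ∫⁻ u in Metric.ball w t₁, F u
        = ENNReal.ofReal ((2*t₁)^3) * ∫⁻ w in Metric.ball z t₂,
            (∫⁻ u in Metric.ball w t₁, F u) / ENNReal.ofReal ((2*t₁)^3) := by
      rw [← lintegral_const_mul' _ _ hv₁t]
      refine lintegral_congr fun w => ?_
      rw [mul_comm, ENNReal.div_mul_cancel hv₁0 hv₁t]
    have hlow := lower_double hF h1 h12 z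
    rw [hJ] at hlow
    nth_rewrite 1 [h8] at hlow
    have hlow2 : (∫⁻ u in Metric.ball z t₂, F u) * ENNReal.ofReal (t₁^3)
        ≤ 8 * ENNReal.ofReal (t₁^3) * ∫⁻ w in Metric.ball z t₂,
            (∫⁻ u in Metric.ball w t₁, F u) / ENNReal.ofReal ((2*t₁)^3) := by
      rw [mul_comm]; exact hlow
    have := (ENNReal.le_div_iff_mul_le (Or.inl hc0) (Or.inl hct)).2 hlow2
    calc (∫⁻ u in Metric.ball z t₂, F u)
        ≤ 8 * ENNReal.ofReal (t₁^3) * (∫⁻ w in Metric.ball z t₂,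
            (∫⁻ u in Metric.ball w t₁, F u) / ENNReal.ofReal ((2*t₁)^3))
          / ENNReal.ofReal (t₁^3) := this
      _ = 8 * ∫⁻ w in Metric.ball z t₂,
            (∫⁻ u in Metric.ball w t₁, F u) / ENNReal.ofReal ((2*t₁)^3) := by
          rw [show (8:ENNReal) * ENNReal.ofReal (t₁^3) * (∫⁻ w in Metric.ball z t₂,
              (∫⁻ u in Metric.ball w t₁, F u) / ENNReal.ofReal ((2*t₁)^3))
            = ENNReal.ofReal (t₁^3) * (8 * ∫⁻ w in Metric.ball z t₂,
              (∫⁻ u in Metric.ball w t₁, F u) / ENNReal.ofReal ((2*t₁)^3)) by ring,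
            mul_div_assoc, ENNReal.mul_div_cancel hc0 hct]
  -- Step (ii): Jensen
  have step2 : ((∫⁻ w in Metric.ball z t₂,
        (∫⁻ u in Metric.ball w t₁, F u) / ENNReal.ofReal ((2*t₁)^3))
          / ENNReal.ofReal ((2*t₂)^3)) ^ r
      ≤ (∫⁻ w in Metric.ball z t₂,
          ((∫⁻ u in Metric.ball w t₁, F u) / ENNReal.ofReal ((2*t₁)^3)) ^ r)
        / ENNReal.ofReal ((2*t₂)^3) := by
    refine div_jensen hr hm0 hmt ?_
    have := jensen_rpow (μ := volume.restrict (Metric.ball z t₂))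
      (h := fun w => (∫⁻ u in Metric.ball w t₁, F u) / ENNReal.ofReal ((2*t₁)^3))
      hΦmeas.aemeasurable hr
    rwa [Measure.restrict_apply_univ, vol_ball_fin3 z ht₂] at this
  calc ((∫⁻ u in Metric.ball z t₂, F u) / ENNReal.ofReal ((2*t₂)^3)) ^ r
      ≤ ((8 * ∫⁻ w in Metric.ball z t₂,
            (∫⁻ u in Metric.ball w t₁, F u) / ENNReal.ofReal ((2*t₁)^3))
          / ENNReal.ofReal ((2*t₂)^3)) ^ r :=
        ENNReal.rpow_le_rpow (ENNReal.div_le_div_right step1 _) hr0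
    _ = (8:ENNReal) ^ r * (((∫⁻ w in Metric.ball z t₂,
            (∫⁻ u in Metric.ball w t₁, F u) / ENNReal.ofReal ((2*t₁)^3))
          / ENNReal.ofReal ((2*t₂)^3))) ^ r := by
        rw [mul_div_assoc, ENNReal.mul_rpow_of_nonneg _ _ hr0]
    _ ≤ (8:ENNReal) ^ r *
        ((∫⁻ w in Metric.ball z t₂,
            ((∫⁻ u in Metric.ball w t₁, F u) / ENNReal.ofReal ((2*t₁)^3)) ^ r)
          / ENNReal.ofReal ((2*t₂)^3)) := mul_le_mul_right step2 _

/-- Lemma `lem.est.M.op.properties (iv)`: for `0 < t₁ ≤ t₂ ≤ s` with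
`Q_{s+t₁+t₂}(y) ⊆ Q₁` and `q ∈ [p,∞)`,
`⨍_{Q_s(y)} M_{t₂}^p[g]^q ≤ C ⨍_{Q_{s+t₂}(y)} M_{t₁}^p[g]^q`, with `C = C(p,q)`. -/
theorem avgOp_average_comparison (p q : ℝ) (hp : 1 ≤ p) (hpq : p ≤ q) :
    ∃ C : ℝ, 0 < C ∧
      ∀ g : (Fin 3 → ℝ) → ℝ,
        MemLp g (ENNReal.ofReal p) (volume.restrict (cube 0 1)) →
        ∀ (t₁ t₂ s : ℝ) (y : Fin 3 → ℝ), 0 < t₁ → t₁ ≤ t₂ → t₂ ≤ s →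
          cube y (s + t₁ + t₂) ⊆ cube 0 1 →
          (⨍ z in cube y s, (avgOp p t₂ g z) ^ q) ≤
            C * ⨍ z in cube y (s + t₂), (avgOp p t₁ g z) ^ q := by
  have hp0 : 0 < p := lt_of_lt_of_le one_pos hp
  set r : ℝ := q / p with hrdef
  have hr1 : 1 ≤ r := (one_le_div hp0).2 hpq
  have hr0 : (0:ℝ) ≤ r := by linarith
  refine ⟨8 ^ (1 + r), by positivity, ?_⟩
  intro g hg t₁ t₂ s y ht₁ h12 h2s hsub
  have ht₂ : 0 < t₂ := lt_of_lt_of_le ht₁ h12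
  have hs : 0 < s := lt_of_lt_of_le ht₂ h2s
  have hst₂ : 0 < s + t₂ := by linarith
  -- inclusions
  have hsubQ : Metric.ball y (s + t₁ + t₂) ⊆ Metric.ball 0 1 := hsub
  have hin₂ : ∀ z ∈ Metric.ball y s, Metric.ball z t₂ ⊆ cube 0 1 := by
    intro z hz
    refine subset_trans (Metric.ball_subset_ball'
      (show t₂ + dist z y ≤ s + t₁ + t₂ by
        have := Metric.mem_ball.1 hz; linarith)) hsubQ
  have hin₁ : ∀ w ∈ Metric.ball y (s + t₂), Metric.ball w t₁ ⊆ cube 0 1 := by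
    intro w hw
    refine subset_trans (Metric.ball_subset_ball'
      (show t₁ + dist w y ≤ s + t₁ + t₂ by
        have := Metric.mem_ball.1 hw; linarith)) hsubQ
  -- measurable representative
  have hgm := hg.1
  set g' : (Fin 3 → ℝ) → ℝ := hgm.mk g with hg'def
  have hg'meas : Measurable g' := hgm.stronglyMeasurable_mk.measurable
  have hgg' : g =ᵐ[volume.restrict (cube 0 1)] g' := hgm.ae_eq_mk
  have havg_eq : ∀ t : ℝ, ∀ z : Fin 3 → ℝ, Metric.ball z t ⊆ cube 0 1 →
      avgOp p t g z = avgOp p t g' z := by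
    intro t z hz
    unfold avgOp
    congr 1
    rw [setAverage_eq, setAverage_eq]
    congr 1
    refine integral_congr_ae ?_
    filter_upwards [ae_restrict_of_ae_restrict_of_subset hz hgg'] with x hx
    rw [hx]
  have havg_nonneg : ∀ (t : ℝ) (z : Fin 3 → ℝ), 0 ≤ avgOp p t g' z := by
    intro t z
    apply Real.rpow_nonneg
    rw [setAverage_eq, smul_eq_mul]
    exact mul_nonneg (by positivity)
      (integral_nonneg fun x => Real.rpow_nonneg (abs_nonneg _) _)
  -- integrability
  have hmem' : MemLp g' (ENNReal.ofReal p) (volume.restrict (cube 0 1)) := hg.ae_eq hgg'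
  have hInt1 : Integrable (fun u => |g' u| ^ p) (volume.restrict (cube 0 1)) := by
    have h1 := hmem'.integrable_norm_rpow
      (by simp only [ne_eq, ENNReal.ofReal_eq_zero, not_le]; linarith)
      ENNReal.ofReal_ne_top
    simpa [Real.norm_eq_abs, ENNReal.toReal_ofReal hp0.le] using h1
  have hK : (∫⁻ u in cube 0 1, ENNReal.ofReal (|g' u| ^ p)) < ⊤ :=
    hInt1.lintegral_lt_top
  set F : (Fin 3 → ℝ) → ENNReal := fun u => ENNReal.ofReal (|g' u| ^ p) with hFdef
  have hFmeas : Measurable F :=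
    ENNReal.measurable_ofReal.comp ((hg'meas.abs).pow_const p)
  -- key identity
  have hid : ∀ t : ℝ, 0 < t → ∀ z : Fin 3 → ℝ, Metric.ball z t ⊆ cube 0 1 →
      ENNReal.ofReal (avgOp p t g' z ^ q)
        = ((∫⁻ u in Metric.ball z t, F u) / ENNReal.ofReal ((2*t)^3)) ^ r ∧
      ((∫⁻ u in Metric.ball z t, F u) / ENNReal.ofReal ((2*t)^3)) ^ r ≠ ⊤ := by
    intro t ht z hz
    have hIle : (∫⁻ u in Metric.ball z t, F u) ≤ ∫⁻ u in cube 0 1, F u :=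
      lintegral_mono_set hz
    have hIne : (∫⁻ u in Metric.ball z t, F u) ≠ ⊤ := (lt_of_le_of_lt hIle hK).ne
    have hv0 : ENNReal.ofReal ((2*t)^3) ≠ 0 := by
      simp only [ne_eq, ENNReal.ofReal_eq_zero, not_le]; positivity
    have hfin : (∫⁻ u in Metric.ball z t, F u) / ENNReal.ofReal ((2*t)^3) ≠ ⊤ :=
      (ENNReal.div_lt_top hIne hv0).ne
    have hfin2 : ((∫⁻ u in Metric.ball z t, F u) / ENNReal.ofReal ((2*t)^3)) ^ r ≠ ⊤ :=
      ENNReal.rpow_ne_top_of_nonneg hr0 hfin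
    refine ⟨?_, hfin2⟩
    have hreal : ∫ u in Metric.ball z t, |g' u| ^ p
        = (∫⁻ u in Metric.ball z t, F u).toReal := by
      rw [integral_eq_lintegral_of_nonneg_ae
        (ae_of_all _ fun x => Real.rpow_nonneg (abs_nonneg _) p)
        ((hg'meas.abs.pow_const p).aestronglyMeasurable)]
    have h1 : avgOp p t g' z
        = ((∫⁻ u in Metric.ball z t, F u) / ENNReal.ofReal ((2*t)^3)).toReal ^ (1/p) := by
      unfold avgOp
      congr 1
      show ⨍ u in Metric.ball z t, |g' u| ^ p = _
      rw [setAverage_eq, hreal, measureReal_def, vol_ball_fin3 z ht, smul_eq_mul, ENNReal.toReal_div,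
        inv_mul_eq_div]
    rw [h1, ← Real.rpow_mul ENNReal.toReal_nonneg, one_div_mul_eq_div, ENNReal.toReal_rpow,
      ENNReal.ofReal_toReal hfin2]
  -- main ENNReal estimate
  have h8rt : ((8:ENNReal) ^ r) ≠ ⊤ :=
    ENNReal.rpow_ne_top_of_nonneg hr0 (by norm_num)
  have hv₂0 : ENNReal.ofReal ((2*t₂)^3) ≠ 0 := by
    simp only [ne_eq, ENNReal.ofReal_eq_zero, not_le]; positivity
  have hv₂t : ENNReal.ofReal ((2*t₂)^3) ≠ ⊤ := ENNReal.ofReal_ne_top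
  have hΨ₁meas : Measurable (fun w =>
      ((∫⁻ u in Metric.ball w t₁, F u) / ENNReal.ofReal ((2*t₁)^3)) ^ r) :=
    ((meas_ball_lintegral hFmeas).div_const _).pow_const _
  have hEL : (∫⁻ z in Metric.ball y s,
        ((∫⁻ u in Metric.ball z t₂, F u) / ENNReal.ofReal ((2*t₂)^3)) ^ r)
      ≤ (8:ENNReal) ^ r * ∫⁻ w in Metric.ball y (s + t₂),
          ((∫⁻ u in Metric.ball w t₁, F u) / ENNReal.ofReal ((2*t₁)^3)) ^ r := by
    have hconst_ne : (8:ENNReal) ^ r / ENNReal.ofReal ((2*t₂)^3) ≠ ⊤ :=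
      (ENNReal.div_lt_top h8rt hv₂0).ne
    calc ∫⁻ z in Metric.ball y s,
          ((∫⁻ u in Metric.ball z t₂, F u) / ENNReal.ofReal ((2*t₂)^3)) ^ r
        ≤ ∫⁻ z in Metric.ball y s, (8:ENNReal) ^ r *
            ((∫⁻ w in Metric.ball z t₂,
              ((∫⁻ u in Metric.ball w t₁, F u) / ENNReal.ofReal ((2*t₁)^3)) ^ r)
              / ENNReal.ofReal ((2*t₂)^3)) :=
          setLIntegral_mono' measurableSet_ball fun z _ => stepA hFmeas hr1 ht₁ h12 z
      _ = ((8:ENNReal) ^ r / ENNReal.ofReal ((2*t₂)^3)) * ∫⁻ z in Metric.ball y s,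
            ∫⁻ w in Metric.ball z t₂,
              ((∫⁻ u in Metric.ball w t₁, F u) / ENNReal.ofReal ((2*t₁)^3)) ^ r := by
          rw [← lintegral_const_mul' _ _ hconst_ne]
          refine lintegral_congr fun z => ?_
          rw [div_eq_mul_inv, div_eq_mul_inv]; ring
      _ ≤ ((8:ENNReal) ^ r / ENNReal.ofReal ((2*t₂)^3)) * (ENNReal.ofReal ((2*t₂)^3) *
            ∫⁻ w in Metric.ball y (s + t₂),
              ((∫⁻ u in Metric.ball w t₁, F u) / ENNReal.ofReal ((2*t₁)^3)) ^ r) :=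
          mul_le_mul_right (upper_double hΨ₁meas ht₂ y) _
      _ = (8:ENNReal) ^ r * ∫⁻ w in Metric.ball y (s + t₂),
            ((∫⁻ u in Metric.ball w t₁, F u) / ENNReal.ofReal ((2*t₁)^3)) ^ r := by
          rw [div_eq_mul_inv, mul_assoc, ← mul_assoc (ENNReal.ofReal ((2*t₂)^3))⁻¹,
            ENNReal.inv_mul_cancel hv₂0 hv₂t, one_mul]
  have hER : (∫⁻ w in Metric.ball y (s + t₂),
      ((∫⁻ u in Metric.ball w t₁, F u) / ENNReal.ofReal ((2*t₁)^3)) ^ r) ≠ ⊤ := by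
    have hbound : ∀ w ∈ Metric.ball y (s + t₂),
        ((∫⁻ u in Metric.ball w t₁, F u) / ENNReal.ofReal ((2*t₁)^3)) ^ r
          ≤ ((∫⁻ u in cube 0 1, F u) / ENNReal.ofReal ((2*t₁)^3)) ^ r := by
      intro w hw
      exact ENNReal.rpow_le_rpow
        (ENNReal.div_le_div_right (lintegral_mono_set (hin₁ w hw)) _) hr0
    have hv₁0 : ENNReal.ofReal ((2*t₁)^3) ≠ 0 := by
      simp only [ne_eq, ENNReal.ofReal_eq_zero, not_le]; positivity
    have hcne : ((∫⁻ u in cube 0 1, F u) / ENNReal.ofReal ((2*t₁)^3)) ^ r ≠ ⊤ :=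
      ENNReal.rpow_ne_top_of_nonneg hr0 (ENNReal.div_lt_top hK.ne hv₁0).ne
    refine ne_top_of_le_ne_top (ENNReal.mul_ne_top hcne
      (vol_ball_fin3 y hst₂ ▸ ENNReal.ofReal_ne_top : volume (Metric.ball y (s+t₂)) ≠ ⊤)) ?_
    calc ∫⁻ w in Metric.ball y (s + t₂),
          ((∫⁻ u in Metric.ball w t₁, F u) / ENNReal.ofReal ((2*t₁)^3)) ^ r
        ≤ ∫⁻ _ in Metric.ball y (s + t₂),
            ((∫⁻ u in cube 0 1, F u) / ENNReal.ofReal ((2*t₁)^3)) ^ r :=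
          setLIntegral_mono' measurableSet_ball hbound
      _ = ((∫⁻ u in cube 0 1, F u) / ENNReal.ofReal ((2*t₁)^3)) ^ r
            * volume (Metric.ball y (s + t₂)) := setLIntegral_const _ _
  -- rewrite both set averages
  have havg : ∀ t ρ : ℝ, 0 < t → 0 < ρ →
      (∀ z ∈ Metric.ball y ρ, Metric.ball z t ⊆ cube 0 1) →
      (⨍ z in cube y ρ, (avgOp p t g z) ^ q)
        = (∫⁻ z in Metric.ball y ρ,
            ((∫⁻ u in Metric.ball z t, F u) / ENNReal.ofReal ((2*t)^3)) ^ r).toReal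
          / ((2*ρ)^3) := by
    intro t ρ ht hρ hin
    have hmeasΨ : Measurable (fun z =>
        ((∫⁻ u in Metric.ball z t, F u) / ENNReal.ofReal ((2*t)^3)) ^ r) :=
      ((meas_ball_lintegral hFmeas).div_const _).pow_const _
    have heq : ∀ z ∈ Metric.ball y ρ, (avgOp p t g z) ^ q
        = (((∫⁻ u in Metric.ball z t, F u) / ENNReal.ofReal ((2*t)^3)) ^ r).toReal := by
      intro z hz
      rw [havg_eq t z (hin z hz)]
      obtain ⟨h1, _⟩ := hid t ht z (hin z hz)
      rw [← h1, ENNReal.toReal_ofReal (Real.rpow_nonneg (havg_nonneg t z) q)]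
    rw [show cube y ρ = Metric.ball y ρ from rfl, setAverage_eq, measureReal_def, vol_ball_fin3 y hρ,
      ENNReal.toReal_ofReal (by positivity), smul_eq_mul,
      setIntegral_congr_fun measurableSet_ball heq,
      integral_eq_lintegral_of_nonneg_ae
        (ae_of_all _ fun z => ENNReal.toReal_nonneg)
        hmeasΨ.ennreal_toReal.aestronglyMeasurable,
      inv_mul_eq_div]
    congr 2
    refine setLIntegral_congr_fun measurableSet_ball (fun z hz => ?_)
    exact ENNReal.ofReal_toReal (hid t ht z (hin z hz)).2
  have hLHS := havg t₂ s ht₂ hs hin₂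
  have hRHS := havg t₁ (s + t₂) ht₁ hst₂ hin₁
  rw [hLHS, hRHS]
  -- final real arithmetic
  set a : ℝ := (∫⁻ z in Metric.ball y s,
      ((∫⁻ u in Metric.ball z t₂, F u) / ENNReal.ofReal ((2*t₂)^3)) ^ r).toReal with hadef
  set b : ℝ := (∫⁻ w in Metric.ball y (s + t₂),
      ((∫⁻ u in Metric.ball w t₁, F u) / ENNReal.ofReal ((2*t₁)^3)) ^ r).toReal with hbdef
  have hb0 : 0 ≤ b := ENNReal.toReal_nonneg
  have hab : a ≤ 8 ^ r * b := by
    have := ENNReal.toReal_mono (ENNReal.mul_ne_top h8rt hER) hEL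
    rwa [ENNReal.toReal_mul, ← ENNReal.toReal_rpow,
      show ((8:ENNReal)).toReal = (8:ℝ) by simp] at this
  have hA : (0:ℝ) < (2*s)^3 := by positivity
  have hB : (0:ℝ) < (2*(s+t₂))^3 := by positivity
  have hBA : (2*(s+t₂))^3 ≤ 8 * (2*s)^3 := by
    have h1 : (2*(s+t₂))^3 ≤ (4*s)^3 :=
      pow_le_pow_left₀ (by linarith) (by linarith) 3
    nlinarith [h1]
  have h8 : (8:ℝ) ^ (1+r) = 8 * 8 ^ r := by
    rw [Real.rpow_add (by norm_num), Real.rpow_one]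
  have hBA' : 1/((2*s)^3) ≤ 8/((2*(s+t₂))^3) := by
    rw [div_le_div_iff₀ hA hB]; linarith
  calc a / ((2*s)^3) = a * (1/((2*s)^3)) := by ring
    _ ≤ (8 ^ r * b) * (8/((2*(s+t₂))^3)) :=
        mul_le_mul hab hBA' (by positivity) (by positivity)
    _ = 8 ^ (1+r) * (b / ((2*(s+t₂))^3)) := by rw [h8]; ring
end

section
/- Let p ∈ [1,∞) and let g ∈ L^p(Q₁). There exists a constant C depending only on p such that for all 0 < s ≤ t and all y with Q_{s+t}(y) ⊆ Q₁, one has M_t^p[g](y) ≤ C ⨍_{Q_s(y)} M_t^p[g](z) dz. -/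
open MeasureTheory

set_option maxHeartbeats 1000000 in
/-- Lemma `lem.est.M.op.properties (v)`: for `0 < s ≤ t` with `Q_{s+t}(y) ⊆ Q₁`,
`M_t^p[g](y) ≤ C ⨍_{Q_s(y)} M_t^p[g]`, with `C = C(p)`. -/
theorem avgOp_pointwise_by_average (p : ℝ) (hp : 1 ≤ p) :
    ∃ C : ℝ, 0 < C ∧
      ∀ g : (Fin 3 → ℝ) → ℝ,
        MemLp g (ENNReal.ofReal p) (volume.restrict (cube 0 1)) →
        ∀ (s t : ℝ) (y : Fin 3 → ℝ), 0 < s → s ≤ t →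
          cube y (s + t) ⊆ cube 0 1 →
          avgOp p t g y ≤ C * ⨍ z in cube y s, avgOp p t g z := by
  classical
  refine ⟨512, by norm_num, ?_⟩
  intro g hg s t y hs hst hsub
  have hp0 : (0:ℝ) < p := lt_of_lt_of_le one_pos hp
  have ht : (0:ℝ) < t := hs.trans_le hst
  simp only [cube] at hsub ⊢
  set Q1 : Set (Fin 3 → ℝ) := Metric.ball (0 : Fin 3 → ℝ) 1 with hQ1
  have hQ1meas : MeasurableSet Q1 := Metric.isOpen_ball.measurableSet
  -- measurable modification of g
  set h : (Fin 3 → ℝ) → ℝ := hg.1.mk g with hh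
  have hgh : g =ᵐ[volume.restrict Q1] h := hg.1.ae_eq_mk
  have hhmeas : Measurable h := hg.1.stronglyMeasurable_mk.measurable
  set f₀ : (Fin 3 → ℝ) → ℝ := Q1.indicator (fun w => |h w| ^ p) with hf₀
  have hf₀meas : Measurable f₀ := by
    exact ((hhmeas.abs).pow_const p |>.indicator hQ1meas)
  have hf₀nonneg : ∀ w, 0 ≤ f₀ w := by
    intro w
    exact Set.indicator_nonneg (fun w _ => Real.rpow_nonneg (abs_nonneg _) p) w
  have hf₀int : Integrable f₀ := by
    rw [hf₀, integrable_indicator_iff hQ1meas]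
    have h1 : Integrable (fun x => ‖g x‖ ^ (ENNReal.ofReal p).toReal)
        (volume.restrict Q1) :=
      hg.integrable_norm_rpow (by simp [ENNReal.ofReal_eq_zero]; linarith)
        ENNReal.ofReal_ne_top
    rw [ENNReal.toReal_ofReal hp0.le] at h1
    refine (h1.congr ?_)
    filter_upwards [hgh] with w hw
    simp [Real.norm_eq_abs, hw]
  -- volume of balls
  have vol_ball : ∀ (z : Fin 3 → ℝ) (r : ℝ), 0 < r →
      (volume (Metric.ball z r)).toReal = (2*r)^(3:ℕ) := by
    intro z r hr
    rw [Real.volume_pi_ball z hr, ENNReal.toReal_ofReal (by positivity)]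
    norm_num
  -- key integral identity
  have key : ∀ z : Fin 3 → ℝ, Metric.ball z t ⊆ Q1 →
      ∫ w in Metric.ball z t, |g w| ^ p = ∫ w in Metric.ball z t, f₀ w := by
    intro z hz
    have h1 : ∀ᵐ w ∂(volume.restrict (Metric.ball z t)), g w = h w :=
      ae_restrict_of_ae_restrict_of_subset hz hgh
    have h2 : ∀ᵐ w ∂(volume.restrict (Metric.ball z t)), w ∈ Metric.ball z t :=
      ae_restrict_mem Metric.isOpen_ball.measurableSet
    refine integral_congr_ae ?_
    filter_upwards [h1, h2] with w hw hwb
    rw [hw, hf₀, Set.indicator_of_mem (hz hwb)]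
  set Tf : (Fin 3 → ℝ) → ℝ := fun z => ∫ w in Metric.ball z t, f₀ w with hTf
  have hTnonneg : ∀ z, 0 ≤ Tf z := fun z =>
    setIntegral_nonneg Metric.isOpen_ball.measurableSet (fun w _ => hf₀nonneg w)
  have avg_eq : ∀ z : Fin 3 → ℝ, Metric.ball z t ⊆ Q1 →
      avgOp p t g z = (((2*t)^(3:ℕ))⁻¹ * Tf z) ^ (1/p) := by
    intro z hz
    simp only [avgOp, cube]
    rw [setAverage_eq, smul_eq_mul, key z hz, measureReal_def, vol_ball z t ht]
  -- covering centers
  set zc : (Fin 3 → Bool) → (Fin 3 → ℝ) :=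
    fun σ i => y i + (if σ i then s/2 else -(s/2)) with hzc
  set N : (Fin 3 → Bool) → ℝ :=
    fun σ => ∫ w in Metric.ball (zc σ) (t - s/4), f₀ w with hN
  have hNnonneg : ∀ σ, 0 ≤ N σ := fun σ =>
    setIntegral_nonneg Metric.isOpen_ball.measurableSet (fun w _ => hf₀nonneg w)
  have hts4 : (0:ℝ) < t - s/4 := by linarith
  -- basic distances
  have hzcy : ∀ σ, dist (zc σ) y ≤ s/2 := by
    intro σ
    rw [dist_pi_le_iff (by linarith)]
    intro i
    simp only [hzc, Real.dist_eq]
    by_cases hb : σ i <;> simp [hb] <;> rw [abs_of_nonneg (by linarith)] <;> linarith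
  have hballQ1 : ∀ z ∈ Metric.ball y s, Metric.ball z t ⊆ Q1 := by
    intro z hz
    refine (Metric.ball_subset_ball' ?_).trans hsub
    rw [Metric.mem_ball] at hz
    linarith [hz.le]
  have hσball : ∀ σ, Metric.ball (zc σ) (s/4) ⊆ Metric.ball y s := by
    intro σ
    refine Metric.ball_subset_ball' ?_
    have := hzcy σ
    linarith
  have hBz : ∀ σ, ∀ z ∈ Metric.ball (zc σ) (s/4),
      Metric.ball (zc σ) (t - s/4) ⊆ Metric.ball z t := by
    intro σ z hz
    refine Metric.ball_subset_ball' ?_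
    rw [Metric.mem_ball, dist_comm] at hz
    linarith [hz.le]
  -- covering
  have hcover : Metric.ball y t ⊆
      ⋃ σ : Fin 3 → Bool, Metric.ball (zc σ) (t - s/4) := by
    intro w hw
    rw [Metric.mem_ball, dist_pi_lt_iff ht] at hw
    refine Set.mem_iUnion.2 ⟨fun i => if y i ≤ w i then true else false, ?_⟩
    rw [Metric.mem_ball, dist_pi_lt_iff hts4]
    intro i
    have hwi := hw i
    rw [Real.dist_eq, abs_lt] at hwi
    rw [Real.dist_eq]
    simp only [hzc]
    by_cases hle : y i ≤ w i
    · simp only [hle, if_true]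
      rw [abs_lt]
      constructor <;> linarith
    · simp only [hle, if_false, Bool.false_eq_true]
      rw [abs_lt]
      push_neg at hle
      constructor <;> linarith
  -- step A : covering inequality
  have stepA : Tf y ≤ ∑ σ : Fin 3 → Bool, N σ := by
    have hind : ∀ w, (Metric.ball y t).indicator f₀ w ≤
        ∑ σ : Fin 3 → Bool, (Metric.ball (zc σ) (t - s/4)).indicator f₀ w := by
      intro w
      by_cases hw : w ∈ Metric.ball y t
      · obtain ⟨S, hS⟩ := Set.mem_iUnion.1 (hcover hw)
        rw [Set.indicator_of_mem hw]
        calc f₀ w = (Metric.ball (zc S) (t - s/4)).indicator f₀ w :=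
              (Set.indicator_of_mem hS f₀).symm
          _ ≤ _ := Finset.single_le_sum
              (f := fun σ : Fin 3 → Bool =>
                (Metric.ball (zc σ) (t - s/4)).indicator f₀ w)
              (fun σ _ => Set.indicator_nonneg (fun w _ => hf₀nonneg w) w)
              (Finset.mem_univ S)
      · rw [Set.indicator_of_notMem hw]
        exact Finset.sum_nonneg fun σ _ =>
          Set.indicator_nonneg (fun w _ => hf₀nonneg w) w
    calc Tf y = ∫ w, (Metric.ball y t).indicator f₀ w :=
          (integral_indicator Metric.isOpen_ball.measurableSet).symm
      _ ≤ ∫ w, ∑ σ : Fin 3 → Bool, (Metric.ball (zc σ) (t - s/4)).indicator f₀ w := by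
          refine integral_mono (hf₀int.indicator Metric.isOpen_ball.measurableSet)
            (integrable_finset_sum _ fun σ _ =>
              hf₀int.indicator Metric.isOpen_ball.measurableSet) hind
      _ = ∑ σ : Fin 3 → Bool, ∫ w, (Metric.ball (zc σ) (t - s/4)).indicator f₀ w :=
          integral_finset_sum _ fun σ _ =>
            hf₀int.indicator Metric.isOpen_ball.measurableSet
      _ = ∑ σ : Fin 3 → Bool, N σ := by
          refine Finset.sum_congr rfl fun σ _ => ?_
          rw [integral_indicator Metric.isOpen_ball.measurableSet]
  -- measurability of the averaging function
  have hTmeas : Measurable Tf := by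
    set F : ((Fin 3 → ℝ) × (Fin 3 → ℝ)) → ℝ :=
      {q : (Fin 3 → ℝ) × (Fin 3 → ℝ) | dist q.2 q.1 < t}.indicator
        (fun q => f₀ q.2) with hF
    have hU : MeasurableSet {q : (Fin 3 → ℝ) × (Fin 3 → ℝ) | dist q.2 q.1 < t} :=
      (isOpen_lt (continuous_snd.dist continuous_fst) continuous_const).measurableSet
    have hFm : Measurable F := (hf₀meas.comp measurable_snd).indicator hU
    have hSM : StronglyMeasurable fun z => ∫ w, F (z, w) :=
      hFm.stronglyMeasurable.integral_prod_right'
    have : Tf = fun z => ∫ w, F (z, w) := by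
      funext z
      show (∫ w in Metric.ball z t, f₀ w) = ∫ w, F (z, w)
      rw [← integral_indicator Metric.isOpen_ball.measurableSet]
      refine integral_congr_ae (Filter.Eventually.of_forall fun w => ?_)
      simp [hF, Set.indicator_apply, Metric.mem_ball]
    rw [this]
    exact hSM.measurable
  have hMnonneg : ∀ z, 0 ≤ avgOp p t g z := by
    intro z
    apply Real.rpow_nonneg
    rw [setAverage_eq, smul_eq_mul]
    refine mul_nonneg (by positivity) (integral_nonneg fun w => ?_)
    exact Real.rpow_nonneg (abs_nonneg _) p
  have hMmeas : AEStronglyMeasurable (fun z => avgOp p t g z)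
      (volume.restrict (Metric.ball y s)) := by
    have hG : Measurable fun z => (((2*t)^(3:ℕ))⁻¹ * Tf z) ^ (1/p) := by
      exact (Real.continuous_rpow_const (by positivity)).measurable.comp
        (hTmeas.const_mul _)
    refine hG.aestronglyMeasurable.congr ?_
    filter_upwards [ae_restrict_mem Metric.isOpen_ball.measurableSet] with z hz
    exact (avg_eq z (hballQ1 z hz)).symm
  -- integrability of avgOp on ball y s
  have hTle : ∀ z : Fin 3 → ℝ, Metric.ball z t ⊆ Q1 → Tf z ≤ ∫ w in Q1, f₀ w := by
    intro z hz
    exact setIntegral_mono_set hf₀int.integrableOn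
      (Filter.Eventually.of_forall hf₀nonneg) (HasSubset.Subset.eventuallyLE hz)
  set B : ℝ := (((2*t)^(3:ℕ))⁻¹ * ∫ w in Q1, f₀ w) ^ (1/p) with hB
  have hMint : IntegrableOn (fun z => avgOp p t g z) (Metric.ball y s) := by
    refine Integrable.mono' (g := fun _ => B) ?_ hMmeas ?_
    · refine integrableOn_const ?_
      rw [Real.volume_pi_ball y hs]
      exact ENNReal.ofReal_ne_top
    · filter_upwards [ae_restrict_mem Metric.isOpen_ball.measurableSet] with z hz
      rw [Real.norm_eq_abs, abs_of_nonneg (hMnonneg z), avg_eq z (hballQ1 z hz)]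
      refine Real.rpow_le_rpow (mul_nonneg (by positivity) (hTnonneg z)) ?_
        (by positivity)
      exact mul_le_mul_of_nonneg_left (hTle z (hballQ1 z hz)) (by positivity)
  -- step B : lower bound for the average
  have stepB : ∀ σ, (((2*t)^(3:ℕ))⁻¹ * N σ) ^ (1/p) ≤
      64 * ⨍ z in Metric.ball y s, avgOp p t g z := by
    intro σ
    set a : ℝ := (((2*t)^(3:ℕ))⁻¹ * N σ) ^ (1/p) with ha
    have hanonneg : 0 ≤ a :=
      Real.rpow_nonneg (mul_nonneg (by positivity) (hNnonneg σ)) _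
    have hptwise : ∀ z ∈ Metric.ball (zc σ) (s/4), a ≤ avgOp p t g z := by
      intro z hz
      rw [avg_eq z (hballQ1 z (hσball σ hz)), ha]
      refine Real.rpow_le_rpow (mul_nonneg (by positivity) (hNnonneg σ)) ?_
        (by positivity)
      refine mul_le_mul_of_nonneg_left ?_ (by positivity)
      exact setIntegral_mono_set hf₀int.integrableOn
        (Filter.Eventually.of_forall hf₀nonneg)
        (HasSubset.Subset.eventuallyLE (hBz σ z hz))
    have h1 : (2*(s/4))^(3:ℕ) * a ≤ ∫ z in Metric.ball (zc σ) (s/4), avgOp p t g z := by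
      have := setIntegral_mono_on
        (integrableOn_const (by rw [Real.volume_pi_ball _ (by linarith : (0:ℝ) < s/4)]; exact ENNReal.ofReal_ne_top))
        (hMint.mono_set (hσball σ)) Metric.isOpen_ball.measurableSet hptwise
      rw [setIntegral_const, smul_eq_mul, measureReal_def, vol_ball _ _ (by linarith : (0:ℝ) < s/4)] at this
      exact this
    have h2 : ∫ z in Metric.ball (zc σ) (s/4), avgOp p t g z ≤
        ∫ z in Metric.ball y s, avgOp p t g z := by
      exact setIntegral_mono_set hMint
        (Filter.Eventually.of_forall fun z => hMnonneg z)
        (HasSubset.Subset.eventuallyLE (hσball σ))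
    rw [setAverage_eq, smul_eq_mul, measureReal_def, vol_ball y s hs]
    have h3 : (2*(s/4))^(3:ℕ) * a ≤ ∫ z in Metric.ball y s, avgOp p t g z :=
      le_trans h1 h2
    have h4 : ((2*s)^(3:ℕ))⁻¹ * ((2*(s/4))^(3:ℕ) * a) ≤
        ((2*s)^(3:ℕ))⁻¹ * ∫ z in Metric.ball y s, avgOp p t g z :=
      mul_le_mul_of_nonneg_left h3 (by positivity)
    have hpos : (0:ℝ) < (2*s)^(3:ℕ) := by positivity
    calc a = ((2*s)^(3:ℕ))⁻¹ * ((2*s)^(3:ℕ) * a) := by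
          rw [← mul_assoc, inv_mul_cancel₀ (ne_of_gt hpos), one_mul]
      _ = 64 * (((2*s)^(3:ℕ))⁻¹ * ((2*(s/4))^(3:ℕ) * a)) := by ring
      _ ≤ 64 * (((2*s)^(3:ℕ))⁻¹ * ∫ z in Metric.ball y s, avgOp p t g z) :=
          mul_le_mul_of_nonneg_left h4 (by norm_num)
  -- choose maximal σ
  obtain ⟨S, -, hS⟩ := Finset.exists_max_image (Finset.univ : Finset (Fin 3 → Bool)) N
    ⟨fun _ => true, Finset.mem_univ _⟩
  have hsum : ∑ σ : Fin 3 → Bool, N σ ≤ 8 * N S := by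
    calc ∑ σ : Fin 3 → Bool, N σ ≤ ∑ _σ : Fin 3 → Bool, N S :=
          Finset.sum_le_sum fun σ _ => hS σ (Finset.mem_univ σ)
      _ = 8 * N S := by
          rw [Finset.sum_const, Finset.card_univ, nsmul_eq_mul]
          norm_num
  have hyQ1 : Metric.ball y t ⊆ Q1 :=
    (Metric.ball_subset_ball (by linarith)).trans hsub
  rw [avg_eq y hyQ1]
  have c1 : (((2*t)^(3:ℕ))⁻¹ * Tf y) ^ (1/p) ≤
      ((8:ℝ) * (((2*t)^(3:ℕ))⁻¹ * N S)) ^ (1/p) := by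
    refine Real.rpow_le_rpow (mul_nonneg (by positivity) (hTnonneg y)) ?_
      (by positivity)
    have : Tf y ≤ 8 * N S := le_trans stepA hsum
    calc ((2*t)^(3:ℕ))⁻¹ * Tf y ≤ ((2*t)^(3:ℕ))⁻¹ * (8 * N S) :=
          mul_le_mul_of_nonneg_left this (by positivity)
      _ = (8:ℝ) * (((2*t)^(3:ℕ))⁻¹ * N S) := by ring
  have c2 : ((8:ℝ) * (((2*t)^(3:ℕ))⁻¹ * N S)) ^ (1/p) =
      (8:ℝ) ^ (1/p) * ((((2*t)^(3:ℕ))⁻¹ * N S)) ^ (1/p) :=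
    Real.mul_rpow (by norm_num) (mul_nonneg (by positivity) (hNnonneg S))
  have c3 : (8:ℝ) ^ (1/p) ≤ 8 := by
    calc (8:ℝ) ^ (1/p) ≤ (8:ℝ) ^ (1:ℝ) := by
          refine Real.rpow_le_rpow_of_exponent_le (by norm_num) ?_
          rw [div_le_one hp0]
          exact hp
      _ = 8 := Real.rpow_one 8
  have hanonneg : 0 ≤ ((((2*t)^(3:ℕ))⁻¹ * N S)) ^ (1/p) :=
    Real.rpow_nonneg (mul_nonneg (by positivity) (hNnonneg S)) _
  calc (((2*t)^(3:ℕ))⁻¹ * Tf y) ^ (1/p)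
      ≤ (8:ℝ) ^ (1/p) * ((((2*t)^(3:ℕ))⁻¹ * N S)) ^ (1/p) := by rw [← c2]; exact c1
    _ ≤ 8 * ((((2*t)^(3:ℕ))⁻¹ * N S)) ^ (1/p) :=
        mul_le_mul_of_nonneg_right c3 hanonneg
    _ ≤ 8 * (64 * ⨍ z in Metric.ball y s, avgOp p t g z) :=
        mul_le_mul_of_nonneg_left (stepB S) (by norm_num)
    _ = 512 * ⨍ z in Metric.ball y s, avgOp p t g z := by ring
end

section
/- Let P : ℝ³ → ℝ³ be a vector field each of whose three components is a homogeneous polynomial of degree 2. Then P vanishes on the plane {x ∈ ℝ³ : x₃ = 0} and has identically zero divergence if and only if P is a real linear combination of P^{(21)}, P^{(22)}, P^{(23)}, P^{(24)}, P^{(25)}, P^{(26)}. Moreover these six vector fields are linearly independent, so the space of homogeneous degree-2 polynomial vector fields on ℝ³ that vanish on {x₃ = 0} and are divergence-free has dimension 6. -/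
/-- The divergence `∇·v = ∑ᵢ ∂ᵢvᵢ` of a vector field `v : ℝ³ → ℝ³`. -/
noncomputable def div3 (v : (Fin 3 → ℝ) → (Fin 3 → ℝ)) (x : Fin 3 → ℝ) : ℝ :=
  ∑ i : Fin 3, fderiv ℝ v x (Pi.single i 1) i

/-- The no-slip Stokes polynomials of degree 2:
`P^{(21)}(x) = (x₂x₃,0,0)`, `P^{(22)}(x) = (x₃²,0,0)`, `P^{(23)}(x) = (0,x₁x₃,0)`,
`P^{(24)}(x) = (0,x₃²,0)`, `P^{(25)}(x) = (−2x₁x₃,0,x₃²)`,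
`P^{(26)}(x) = (0,−2x₂x₃,x₃²)`. -/
noncomputable def P2 : Fin 6 → (Fin 3 → ℝ) → (Fin 3 → ℝ) :=
  ![fun x => ![x 1 * x 2, 0, 0],
    fun x => ![x 2 ^ 2, 0, 0],
    fun x => ![0, x 0 * x 2, 0],
    fun x => ![0, x 2 ^ 2, 0],
    fun x => ![-2 * x 0 * x 2, 0, x 2 ^ 2],
    fun x => ![0, -2 * x 1 * x 2, x 2 ^ 2]]

open ContinuousLinearMap in
lemma cons_val_five {α : Type*} (x : α) (u : Fin 5 → α) : Matrix.vecCons x u 5 = u 4 := rfl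

open ContinuousLinearMap in
lemma quad_hasFDerivAt (c : Fin 3 → Fin 3 → ℝ) (x : Fin 3 → ℝ) :
    HasFDerivAt (fun y : Fin 3 → ℝ => ∑ j : Fin 3, ∑ k : Fin 3, c j k * y j * y k)
      (∑ j : Fin 3, ∑ k : Fin 3,
        ((c j k * x j) • (proj k : (Fin 3 → ℝ) →L[ℝ] ℝ) +
          x k • (c j k • (proj j : (Fin 3 → ℝ) →L[ℝ] ℝ)))) x := by
  refine HasFDerivAt.fun_sum fun j _ => HasFDerivAt.fun_sum fun k _ => ?_
  exact ((proj j : (Fin 3 → ℝ) →L[ℝ] ℝ).hasFDerivAt.const_mul (c j k)).mul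
    (proj k : (Fin 3 → ℝ) →L[ℝ] ℝ).hasFDerivAt

lemma quad_fderiv_apply (c : Fin 3 → Fin 3 → ℝ) (x v : Fin 3 → ℝ) :
    fderiv ℝ (fun y : Fin 3 → ℝ => ∑ j : Fin 3, ∑ k : Fin 3, c j k * y j * y k) x v
      = ∑ j : Fin 3, ∑ k : Fin 3, (c j k * x j * v k + c j k * x k * v j) := by
  rw [(quad_hasFDerivAt c x).fderiv]
  simp only [ContinuousLinearMap.coe_sum', Finset.sum_apply, ContinuousLinearMap.add_apply,
    ContinuousLinearMap.smul_apply, ContinuousLinearMap.proj_apply, smul_eq_mul]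
  exact Finset.sum_congr rfl fun j _ => Finset.sum_congr rfl fun k _ => by ring

lemma div3_quad (c : Fin 3 → Fin 3 → Fin 3 → ℝ) (P : (Fin 3 → ℝ) → (Fin 3 → ℝ))
    (h : ∀ (x : Fin 3 → ℝ) (i : Fin 3), P x i = ∑ j : Fin 3, ∑ k : Fin 3, c i j k * x j * x k)
    (x : Fin 3 → ℝ) :
    div3 P x = ∑ i : Fin 3, ∑ k : Fin 3, (c i i k + c i k i) * x k := by
  have hP : P = fun x i => ∑ j : Fin 3, ∑ k : Fin 3, c i j k * x j * x k := by
    funext x i; exact h x i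
  unfold div3
  rw [hP, fderiv_pi (fun i => (quad_hasFDerivAt (c i) x).differentiableAt)]
  simp only [ContinuousLinearMap.pi_apply]
  rw [Finset.sum_congr rfl fun i _ => quad_fderiv_apply (c i) x (Pi.single i 1)]
  simp [Fin.sum_univ_three, Pi.single_apply]
  ring

/-- A vector field on `ℝ³` whose components are homogeneous quadratic polynomials
vanishes on `{x₃ = 0}` and is divergence-free iff it is a real linear combination of
`P^{(21)},…,P^{(26)}`; moreover these six fields are linearly independent, so the
space of such fields has dimension 6. -/
theorem quadratic_noslip_divfree_iff (P : (Fin 3 → ℝ) → (Fin 3 → ℝ))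
    (hP : ∃ c : Fin 3 → Fin 3 → Fin 3 → ℝ,
      ∀ (x : Fin 3 → ℝ) (i : Fin 3),
        P x i = ∑ j : Fin 3, ∑ k : Fin 3, c i j k * x j * x k) :
    (((∀ x : Fin 3 → ℝ, x 2 = 0 → P x = 0) ∧ (∀ x : Fin 3 → ℝ, div3 P x = 0)) ↔
      ∃ b : Fin 6 → ℝ, P = ∑ j : Fin 6, b j • P2 j) ∧
    LinearIndependent ℝ P2 := by
  obtain ⟨c, hc⟩ := hP
  constructor
  · constructor
    · rintro ⟨hvan, hdiv⟩
      have h00 : ∀ i, c i 0 0 = 0 := by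
        intro i
        have := congrFun (hvan ![1, 0, 0] (by simp)) i
        rw [hc] at this
        simpa [Fin.sum_univ_three] using this
      have h11 : ∀ i, c i 1 1 = 0 := by
        intro i
        have := congrFun (hvan ![0, 1, 0] (by simp)) i
        rw [hc] at this
        simpa [Fin.sum_univ_three] using this
      have hoff : ∀ i, c i 0 1 + c i 1 0 = 0 := by
        intro i
        have := congrFun (hvan ![1, 1, 0] (by simp)) i
        rw [hc] at this
        simp [Fin.sum_univ_three] at this
        linarith [h00 i, h11 i]
      have hd : ∀ x : Fin 3 → ℝ, ∑ i : Fin 3, ∑ k : Fin 3, (c i i k + c i k i) * x k = 0 := by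
        intro x; rw [← div3_quad c P hc x]; exact hdiv x
      have d0 := hd ![1, 0, 0]
      have d1 := hd ![0, 1, 0]
      have d2 := hd ![0, 0, 1]
      simp [Fin.sum_univ_three] at d0 d1 d2
      refine ⟨![c 0 1 2 + c 0 2 1, c 0 2 2, c 1 0 2 + c 1 2 0, c 1 2 2,
        -(c 0 0 2 + c 0 2 0) / 2, -(c 1 1 2 + c 1 2 1) / 2], ?_⟩
      funext x
      funext i
      rw [hc]
      have e1 : (∑ j : Fin 6,
          (![c 0 1 2 + c 0 2 1, c 0 2 2, c 1 0 2 + c 1 2 0, c 1 2 2,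
            -(c 0 0 2 + c 0 2 0) / 2, -(c 1 1 2 + c 1 2 1) / 2] : Fin 6 → ℝ) j • P2 j) x i
          = ∑ j : Fin 6,
          (![c 0 1 2 + c 0 2 1, c 0 2 2, c 1 0 2 + c 1 2 0, c 1 2 2,
            -(c 0 0 2 + c 0 2 0) / 2, -(c 1 1 2 + c 1 2 1) / 2] : Fin 6 → ℝ) j * P2 j x i := by
        simp
      rw [e1]
      fin_cases i <;>
        simp [Fin.sum_univ_six, Fin.sum_univ_three, P2, cons_val_five, Matrix.vecHead, Matrix.vecTail]
      · linear_combination (x 0)^2 * h00 0 + (x 1)^2 * h11 0 + (x 0 * x 1) * hoff 0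
      · linear_combination (x 0)^2 * h00 1 + (x 1)^2 * h11 1 + (x 0 * x 1) * hoff 1
      · linear_combination (x 0)^2 * h00 2 + (x 1)^2 * h11 2 + (x 0 * x 1) * hoff 2 +
          (x 0 * x 2) * (d0 - 2 * h00 0 - hoff 1) + (x 1 * x 2) * (d1 - 2 * h11 1 - hoff 0) +
          ((x 2)^2 / 2) * d2
    · rintro ⟨b, hPb⟩
      have h' : ∀ (x : Fin 3 → ℝ) (i : Fin 3), P x i =
          ∑ j : Fin 3, ∑ k : Fin 3,
            (![![![0, 0, -2 * b 4], ![0, 0, b 0], ![0, 0, b 1]],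
               ![![0, 0, b 2], ![0, 0, -2 * b 5], ![0, 0, b 3]],
               ![![0, 0, 0], ![0, 0, 0], ![0, 0, b 4 + b 5]]] :
              Fin 3 → Fin 3 → Fin 3 → ℝ) i j k * x j * x k := by
        intro x i
        rw [hPb]
        fin_cases i <;>
          · simp [Fin.sum_univ_six, Fin.sum_univ_three, P2, cons_val_five, Matrix.vecHead, Matrix.vecTail]
            ring
      constructor
      · intro x hx
        rw [hPb]
        funext i
        fin_cases i <;> simp [Fin.sum_univ_six, P2, hx, cons_val_five, Matrix.vecHead, Matrix.vecTail]
      · intro x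
        rw [div3_quad _ P h' x]
        simp [Fin.sum_univ_three]
        ring
  · rw [Fintype.linearIndependent_iff]
    intro g hg
    have e1 := congrFun (congrFun hg ![0, 0, 1]) 0
    have e2 := congrFun (congrFun hg ![0, 0, 1]) 1
    have e3 := congrFun (congrFun hg ![0, 0, 1]) 2
    have e4 := congrFun (congrFun hg ![1, 0, 1]) 0
    have e5 := congrFun (congrFun hg ![1, 0, 1]) 1
    have e6 := congrFun (congrFun hg ![0, 1, 1]) 1
    have e7 := congrFun (congrFun hg ![0, 1, 1]) 0
    simp [Fin.sum_univ_six, P2, cons_val_five, Matrix.vecHead, Matrix.vecTail] at e1 e2 e3 e4 e5 e6 e7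
    intro i
    fin_cases i <;> simp <;> linarith
end
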